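/- For every field K of characteristic 0, every n ≥ 1 and every τ ∈ K with τ ≠ 0, one has τ^{2n−2}·G_n(τ⁻¹) = G_n(τ); that is, the refined 20V generating function is palindromic. -/

import Mathlib

noncomputable section

open MvPowerSeries in
/-- The refined generating series `g_20V^ref(u,v)` over a field `K`:
`g_20V + v^{n-1}·((1+u)/(1-u))^{2n}·( τ^n (1-u)² / ((τ-u)(1-τu)) - 1 )`. -/
def gref (K : Type*) [Field K] (n : ℕ) (τ : K) : MvPowerSeries (Fin 2) K :=
  (1 + (X 0 : MvPowerSeries (Fin 2) K) ^ 2) * (1 + 2 * X 0 - X 0 ^ 2) *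
      ((1 - (X 0 : MvPowerSeries (Fin 2) K) ^ 2 * X 1) *
        ((1 - X 0) ^ 2 - X 1 * (1 + X 0) ^ 2))⁻¹ +
    (X 1 : MvPowerSeries (Fin 2) K) ^ (n - 1) *
      ((1 + X 0) * ((1 - X 0 : MvPowerSeries (Fin 2) K))⁻¹) ^ (2 * n) *
      ((C (σ := Fin 2) (R := K) τ) ^ n * (1 - X 0) ^ 2 *
          (((C (σ := Fin 2) (R := K) τ) - X 0) * (1 - (C (σ := Fin 2) (R := K) τ) * X 0))⁻¹ - 1)

open MvPowerSeries in
/-- `G_n(τ) = det_{0≤i,j≤n-1}( g_20V^ref|_{u^i v^j} )`, the determinant formula for the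
refined 20V generating polynomial `Z_n^{20V}(τ)`. -/
def G (K : Type*) [Field K] (n : ℕ) (τ : K) : K :=
  Matrix.det (Matrix.of fun i j : Fin n =>
    coeff (R := K) (Finsupp.single 0 (i : ℕ) + Finsupp.single 1 (j : ℕ)) (gref K n τ))

end
open MvPowerSeries Finsupp
noncomputable section
variable {K : Type*} [Field K]

/-- Series depending only on the first variable. -/
def UOnly (s : MvPowerSeries (Fin 2) K) : Prop :=
  ∀ m : Fin 2 →₀ ℕ, m 1 ≠ 0 → coeff (R := K) m s = 0

lemma UOnly.C (r : K) : UOnly (C (σ := Fin 2) (R := K) r) := by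
  intro m hm
  rw [coeff_C, if_neg]
  rintro rfl; simp at hm

lemma UOnly.one : UOnly (1 : MvPowerSeries (Fin 2) K) := by
  simpa using UOnly.C (1 : K)

lemma UOnly.X0 : UOnly (X 0 : MvPowerSeries (Fin 2) K) := by
  intro m hm
  rw [coeff_X, if_neg]
  rintro rfl; simp at hm

lemma UOnly.add {a b : MvPowerSeries (Fin 2) K} (ha : UOnly a) (hb : UOnly b) :
    UOnly (a + b) := fun m hm => by simp [map_add, ha m hm, hb m hm]

lemma UOnly.neg {a : MvPowerSeries (Fin 2) K} (ha : UOnly a) : UOnly (-a) :=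
  fun m hm => by simp [ha m hm]

lemma UOnly.sub {a b : MvPowerSeries (Fin 2) K} (ha : UOnly a) (hb : UOnly b) :
    UOnly (a - b) := by simpa [sub_eq_add_neg] using ha.add hb.neg

lemma UOnly.mul {a b : MvPowerSeries (Fin 2) K} (ha : UOnly a) (hb : UOnly b) :
    UOnly (a * b) := by
  intro m hm
  rw [coeff_mul]
  refine Finset.sum_eq_zero fun p hp => ?_
  rw [Finset.HasAntidiagonal.mem_antidiagonal] at hp
  rcases eq_or_ne (p.1 1) 0 with h1 | h1
  · have h2 : p.2 1 ≠ 0 := by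
      intro h2; apply hm
      rw [← hp]; simp [h1, h2]
    rw [hb _ h2, mul_zero]
  · rw [ha _ h1, zero_mul]

lemma UOnly.pow {a : MvPowerSeries (Fin 2) K} (ha : UOnly a) (k : ℕ) : UOnly (a ^ k) := by
  induction k with
  | zero => simpa using UOnly.one
  | succ k ih => rw [pow_succ]; exact ih.mul ha

lemma UOnly.inv {a : MvPowerSeries (Fin 2) K} (ha : UOnly a) : UOnly a⁻¹ := by
  have key : ∀ N : ℕ, ∀ m : Fin 2 →₀ ℕ, m 0 + m 1 ≤ N → m 1 ≠ 0 → coeff (R := K) m a⁻¹ = 0 := by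
    intro N
    induction N with
    | zero => intro m hm h1; omega
    | succ N ih =>
      intro m hm h1
      have hm0 : m ≠ 0 := by intro h; rw [h] at h1; simp at h1
      rw [MvPowerSeries.coeff_inv, if_neg hm0]
      have : ∑ x ∈ Finset.HasAntidiagonal.antidiagonal m,
          (if x.2 < m then coeff (R := K) x.1 a * coeff (R := K) x.2 a⁻¹ else 0) = 0 := by
        refine Finset.sum_eq_zero fun p hp => ?_
        rw [Finset.HasAntidiagonal.mem_antidiagonal] at hp
        split_ifs with hlt
        · rcases eq_or_ne (p.1 1) 0 with h2 | h2
          · have hq1 : p.2 1 ≠ 0 := by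
              intro h3; apply h1; rw [← hp]; simp [h2, h3]
            have hle : p.2 0 + p.2 1 ≤ N := by
              have e0 : p.1 0 + p.2 0 = m 0 := by rw [← hp]; simp
              have e1 : p.1 1 + p.2 1 = m 1 := by rw [← hp]; simp
              have hne : p.2 ≠ m := ne_of_lt hlt
              have hlep : p.1 ≠ 0 := by
                intro h4
                apply hne; rw [← hp, h4, zero_add]
              have : p.1 0 ≠ 0 ∨ p.1 1 ≠ 0 := by
                by_contra h5
                push_neg at h5
                apply hlep
                ext i; fin_cases i <;> simp [h5.1, h5.2]
              omega
            rw [ih p.2 hle hq1, mul_zero]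
          · rw [ha _ h2, zero_mul]
        · rfl
      rw [this, mul_zero]
  exact fun m => key (m 0 + m 1) m le_rfl

variable {K : Type*} [Field K]

lemma coeff_X1_pow_mul (s : MvPowerSeries (Fin 2) K) (i j k : ℕ) :
    coeff (R := K) (single 0 i + single 1 j) ((X 1 : MvPowerSeries (Fin 2) K) ^ k * s) =
      if k ≤ j then coeff (R := K) (single 0 i + single 1 (j - k)) s else 0 := by
  rw [X_pow_eq, coeff_monomial_mul]
  by_cases h : k ≤ j
  · rw [if_pos, if_pos h, one_mul]
    · have : (single 0 i + single 1 j) - single (1 : Fin 2) k = single 0 i + single 1 (j - k) := by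
        ext t
        fin_cases t <;> simp [Finsupp.single_apply]
      rw [this]
    · intro t
      fin_cases t <;> simp [Finsupp.single_apply] <;> omega
  · rw [if_neg, if_neg h]
    intro hle
    have := hle 1
    simp [Finsupp.single_apply] at this
    omega

lemma coeff_single0 {s : MvPowerSeries (Fin 2) K} (h : ∀ m : Fin 2 →₀ ℕ, m 1 ≠ 0 → coeff (R := K) m s = 0)
    (i j : ℕ) :
    coeff (R := K) (single 0 i + single 1 j) s = if j = 0 then coeff (R := K) (single (0 : Fin 2) i) s else 0 := by
  rcases eq_or_ne j 0 with rfl | hj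
  · simp
  · rw [if_neg hj]
    exact h _ (by simp [Finsupp.single_apply, hj])

lemma MvPS_inv_pow (φ : MvPowerSeries (Fin 2) K) (h : constantCoeff (σ := Fin 2) (R := K) φ ≠ 0) (k : ℕ) :
    (φ ^ k)⁻¹ = (φ⁻¹) ^ k := by
  symm
  rw [MvPowerSeries.eq_inv_iff_mul_eq_one (by simp [map_pow, h])]
  rw [← mul_pow, MvPowerSeries.inv_mul_cancel _ h, one_pow]

lemma geom_split (x : MvPowerSeries (Fin 2) K) (hx : constantCoeff (σ := Fin 2) (R := K) x = 0) (n : ℕ) :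
    (1 - x)⁻¹ = (∑ k ∈ Finset.range n, x ^ k) + x ^ n * (1 - x)⁻¹ := by
  have h1 : constantCoeff (σ := Fin 2) (R := K) (1 - x) ≠ 0 := by simp [map_sub, hx]
  symm
  rw [MvPowerSeries.eq_inv_iff_mul_eq_one h1, add_mul, mul_assoc,
    MvPowerSeries.inv_mul_cancel _ h1, mul_one]
  have h2 : (∑ k ∈ Finset.range n, x ^ k) * (1 - x) = 1 - x ^ n := by
    have h3 : (∑ k ∈ Finset.range n, x ^ k) * (1 - x)
        = -((∑ k ∈ Finset.range n, x ^ k) * (x - 1)) := by ring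
    rw [h3, geom_sum_mul]; ring
  rw [h2]; ring

end

section
variable {K : Type*} [Field K]

local notation "u" => (X 0 : MvPowerSeries (Fin 2) K)
local notation "v" => (X 1 : MvPowerSeries (Fin 2) K)

lemma ccu : constantCoeff (σ := Fin 2) (R := K) u = 0 := constantCoeff_X 0
lemma ccv : constantCoeff (σ := Fin 2) (R := K) v = 0 := constantCoeff_X 1
lemma ccOneSubU : constantCoeff (σ := Fin 2) (R := K) (1 - u) = 1 := by simp [map_sub, ccu]
lemma ccA : constantCoeff (σ := Fin 2) (R := K) ((1 - u)^2) = 1 := by simp [map_pow, map_sub, ccu]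
lemma ccP : constantCoeff (σ := Fin 2) (R := K) (1 - u^2 * v) = 1 := by
  simp [map_sub, map_mul, map_pow, ccu, ccv]
lemma ccQ : constantCoeff (σ := Fin 2) (R := K) ((1 - u)^2 - v * (1 + u)^2) = 1 := by
  simp [map_sub, map_add, map_mul, map_pow, ccu, ccv]

/-- generic geometric expansion of `s * (1 - s*v)⁻¹`. -/
lemma sv_expand (s : MvPowerSeries (Fin 2) K) (hs : constantCoeff (σ := Fin 2) (R := K) s * 0 = 0)
    (n : ℕ) :
    s * (1 - s * v)⁻¹ = (∑ k ∈ Finset.range n, (X 1 : MvPowerSeries (Fin 2) K)^k * s^(k+1))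
      + (X 1 : MvPowerSeries (Fin 2) K)^n * (s^(n+1) * (1 - s * v)⁻¹) := by
  have hx : constantCoeff (σ := Fin 2) (R := K) (s * v) = 0 := by rw [map_mul, ccv, mul_zero]
  nth_rewrite 1 [geom_split (s * v) hx n]
  rw [mul_add, Finset.mul_sum]
  congr 1
  · exact Finset.sum_congr rfl fun k _ => by ring
  · ring

/-- generic geometric expansion of `b * (a - v*b)⁻¹`. -/
lemma bq_expand (a b : MvPowerSeries (Fin 2) K) (ha : constantCoeff (σ := Fin 2) (R := K) a ≠ 0) (n : ℕ) :
    b * (a - v * b)⁻¹ = (∑ k ∈ Finset.range n, (X 1 : MvPowerSeries (Fin 2) K)^k * (a⁻¹ * b)^(k+1))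
      + (X 1 : MvPowerSeries (Fin 2) K)^n *
        ((a⁻¹ * b)^n * (b * a⁻¹ * (1 - a⁻¹ * b * v)⁻¹)) := by
  set y : MvPowerSeries (Fin 2) K := a⁻¹ * b * v with hydef
  have hy : constantCoeff (σ := Fin 2) (R := K) y = 0 := by rw [hydef, map_mul, ccv, mul_zero]
  have hQfact : a - v * b = a * (1 - y) := by
    have h1 : a * (1 - y) = a - (a * a⁻¹) * (b * v) := by rw [hydef]; ring
    rw [MvPowerSeries.mul_inv_cancel a ha, one_mul] at h1
    rw [h1]; ring
  rw [hQfact, MvPowerSeries.mul_inv_rev]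
  nth_rewrite 1 [geom_split y hy n]
  rw [add_mul, Finset.sum_mul, mul_add, Finset.mul_sum]
  congr 1
  · exact Finset.sum_congr rfl fun k _ => by rw [hydef]; ring
  · rw [hydef]; ring

lemma g20_split :
    (1 + u ^ 2) * (1 + 2 * u - u ^ 2) * ((1 - u ^ 2 * v) * ((1 - u) ^ 2 - v * (1 + u) ^ 2))⁻¹
      = (1 + u)^2 * ((1 - u) ^ 2 - v * (1 + u) ^ 2)⁻¹ - u^2 * (1 - u^2 * v)⁻¹ := by
  set P : MvPowerSeries (Fin 2) K := 1 - u^2 * v with hPdef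
  set Q : MvPowerSeries (Fin 2) K := (1 - u)^2 - v * (1 + u)^2 with hQdef
  have hP : constantCoeff (σ := Fin 2) (R := K) P ≠ 0 := by rw [ccP]; exact one_ne_zero
  have hQ : constantCoeff (σ := Fin 2) (R := K) Q ≠ 0 := by rw [ccQ]; exact one_ne_zero
  rw [MvPowerSeries.mul_inv_rev]
  have hN : (1 + u ^ 2) * (1 + 2 * u - u ^ 2) = (1 + u)^2 * P - u^2 * Q := by
    rw [hPdef, hQdef]; ring
  calc (1 + u ^ 2) * (1 + 2 * u - u ^ 2) * (Q⁻¹ * P⁻¹)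
      = (1 + u)^2 * Q⁻¹ * (P * P⁻¹) - u^2 * P⁻¹ * (Q * Q⁻¹) := by rw [hN]; ring
    _ = (1 + u)^2 * Q⁻¹ - u^2 * P⁻¹ := by
        rw [MvPowerSeries.mul_inv_cancel P hP, MvPowerSeries.mul_inv_cancel Q hQ]; ring

lemma coeff_u2_Pinv {n : ℕ} (hn : 1 ≤ n) {i : ℕ} (hi : i < n) :
    coeff (R := K) (single 0 i + single 1 (n-1)) (u^2 * (1 - u^2 * v)⁻¹) = 0 := by
  rw [sv_expand (u^2) (mul_zero _) n, map_add, map_sum, coeff_X1_pow_mul, if_neg (by omega)]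
  have hterm : ∀ k ∈ Finset.range n,
      coeff (R := K) (single 0 i + single 1 (n-1))
        ((X 1 : MvPowerSeries (Fin 2) K)^k * (u^2)^(k+1)) = 0 := by
    intro k hk
    rw [Finset.mem_range] at hk
    rw [coeff_X1_pow_mul]
    split_ifs with h
    · rw [coeff_single0 ((UOnly.X0.pow 2).pow _) i (n-1-k)]
      split_ifs with h2
      · rw [← pow_mul, coeff_X_pow, if_neg]
        intro he
        have := DFunLike.congr_fun he 0
        simp [Finsupp.single_apply] at this
        omega
      · rfl
    · rfl
  rw [Finset.sum_eq_zero hterm]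
  simp

lemma coeff_B_Qinv {n : ℕ} (hn : 1 ≤ n) (i : ℕ) :
    coeff (R := K) (single 0 i + single 1 (n-1)) ((1+u)^2 * ((1 - u)^2 - v * (1 + u)^2)⁻¹)
      = coeff (R := K) (single (0 : Fin 2) i) (((1+u) * (1-u)⁻¹)^(2*n)) := by
  have hA : constantCoeff (σ := Fin 2) (R := K) ((1-u)^2) ≠ 0 := by rw [ccA]; exact one_ne_zero
  rw [bq_expand ((1-u)^2) ((1+u)^2) hA n, map_add, map_sum, coeff_X1_pow_mul, if_neg (by omega),
    add_zero]
  have hUAB : UOnly ((((1-u)^2)⁻¹ : MvPowerSeries (Fin 2) K) * (1+u)^2) :=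
    (((UOnly.one.sub UOnly.X0).pow 2).inv).mul ((UOnly.one.add UOnly.X0).pow 2)
  have hterm : ∀ k ∈ Finset.range n,
      coeff (R := K) (single 0 i + single 1 (n-1))
        ((X 1 : MvPowerSeries (Fin 2) K)^k * ((((1-u)^2)⁻¹ * (1+u)^2))^(k+1))
        = if k = n-1 then
            coeff (R := K) (single (0 : Fin 2) i) (((((1-u)^2)⁻¹ * (1+u)^2))^n) else 0 := by
    intro k hk
    rw [Finset.mem_range] at hk
    rw [coeff_X1_pow_mul]
    split_ifs with h h2 h2
    · rw [coeff_single0 (hUAB.pow _) i (n-1-k), if_pos (by omega)]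
      have hkn : k + 1 = n := by omega
      rw [hkn]
    · rw [coeff_single0 (hUAB.pow _) i (n-1-k), if_neg (by omega)]
    · omega
    · rfl
  rw [Finset.sum_congr rfl hterm,
    Finset.sum_ite_eq' (Finset.range n) (n-1)
      (fun _ => coeff (R := K) (single (0 : Fin 2) i) (((((1-u)^2)⁻¹ * (1+u)^2))^n)),
    if_pos (Finset.mem_range.mpr (by omega))]
  congr 1
  have h1 : (((1-u)^2)⁻¹ : MvPowerSeries (Fin 2) K) * (1+u)^2 = ((1+u) * (1-u)⁻¹)^2 := by
    rw [MvPS_inv_pow (1-u) (by rw [ccOneSubU]; exact one_ne_zero) 2]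
    ring
  rw [h1, ← pow_mul]

lemma coeff_g20 {n : ℕ} (hn : 1 ≤ n) {i : ℕ} (hi : i < n) :
    coeff (R := K) (single 0 i + single 1 (n-1))
      ((1 + u ^ 2) * (1 + 2 * u - u ^ 2) * ((1 - u ^ 2 * v) * ((1 - u) ^ 2 - v * (1 + u) ^ 2))⁻¹)
      = coeff (R := K) (single (0 : Fin 2) i) (((1+u) * (1-u)⁻¹)^(2*n)) := by
  rw [g20_split, map_sub, coeff_u2_Pinv hn hi, coeff_B_Qinv hn i, sub_zero]

end

section
variable {K : Type*} [Field K]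

local notation "u" => (X 0 : MvPowerSeries (Fin 2) K)
local notation "v" => (X 1 : MvPowerSeries (Fin 2) K)

lemma ccD {τ : K} (hτ0 : τ ≠ 0) :
    constantCoeff (σ := Fin 2) (R := K) ((C (σ := Fin 2) (R := K) τ - u) * (1 - C (σ := Fin 2) (R := K) τ * u)) ≠ 0 := by
  simp [map_sub, map_mul, ccu, constantCoeff_C, hτ0]

lemma D_inv_swap {τ : K} (hτ0 : τ ≠ 0) :
    ((C (σ := Fin 2) (R := K) τ⁻¹ - u) * (1 - C (σ := Fin 2) (R := K) τ⁻¹ * u))⁻¹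
      = C (σ := Fin 2) (R := K) (τ^2) * ((C (σ := Fin 2) (R := K) τ - u) * (1 - C (σ := Fin 2) (R := K) τ * u))⁻¹ := by
  have h : (C (σ := Fin 2) (R := K) τ) * (C (σ := Fin 2) (R := K) τ⁻¹) = 1 := by
    rw [← map_mul, mul_inv_cancel₀ hτ0, map_one]
  have hD : (C (σ := Fin 2) (R := K) τ⁻¹ - u) * (1 - C (σ := Fin 2) (R := K) τ⁻¹ * u)
      = C (σ := Fin 2) (R := K) (τ⁻¹^2) * ((C (σ := Fin 2) (R := K) τ - u) * (1 - C (σ := Fin 2) (R := K) τ * u)) := by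
    rw [map_pow]
    linear_combination (-(C (σ := Fin 2) (R := K) τ⁻¹ - u - (C (σ := Fin 2) (R := K) τ) * (C (σ := Fin 2) (R := K) τ⁻¹) * u
      + (C (σ := Fin 2) (R := K) τ⁻¹) * u^2)) * h
  rw [hD, MvPowerSeries.mul_inv_rev, MvPowerSeries.C_inv]
  rw [inv_pow, inv_inv]
  ring

end

section
variable {K : Type*} [Field K]

local notation "u" => (X 0 : MvPowerSeries (Fin 2) K)

lemma keyF {n : ℕ} (hn : 1 ≤ n) {τ : K} (hτ0 : τ ≠ 0) :
    C (σ := Fin 2) (R := K) (τ^(2*n-2)) * (C (σ := Fin 2) (R := K) τ⁻¹ ^ n * (1 - u)^2 *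
        ((C (σ := Fin 2) (R := K) τ⁻¹ - u) * (1 - C (σ := Fin 2) (R := K) τ⁻¹ * u))⁻¹)
      = C (σ := Fin 2) (R := K) τ ^ n * (1 - u)^2 * ((C (σ := Fin 2) (R := K) τ - u) * (1 - C (σ := Fin 2) (R := K) τ * u))⁻¹ := by
  rw [D_inv_swap hτ0]
  have hsc : τ^(2*n-2) * ((τ⁻¹)^n * τ^2) = τ^n := by
    have h1 : τ^(2*n-2) * τ^2 = τ^(2*n) := by rw [← pow_add]; congr 1; omega
    calc τ^(2*n-2) * ((τ⁻¹)^n * τ^2) = (τ^(2*n-2) * τ^2) * (τ⁻¹)^n := by ring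
      _ = τ^(2*n) * (τ⁻¹)^n := by rw [h1]
      _ = τ^n * (τ * τ⁻¹)^n := by rw [mul_pow, two_mul, pow_add]; ring
      _ = τ^n := by rw [mul_inv_cancel₀ hτ0, one_pow, mul_one]
  calc C (σ := Fin 2) (R := K) (τ^(2*n-2)) * (C (σ := Fin 2) (R := K) τ⁻¹ ^ n * (1 - u)^2 *
        (C (σ := Fin 2) (R := K) (τ^2) * ((C (σ := Fin 2) (R := K) τ - u) * (1 - C (σ := Fin 2) (R := K) τ * u))⁻¹))
      = C (σ := Fin 2) (R := K) (τ^(2*n-2) * ((τ⁻¹)^n * τ^2)) *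
          ((1 - u)^2 * ((C (σ := Fin 2) (R := K) τ - u) * (1 - C (σ := Fin 2) (R := K) τ * u))⁻¹) := by
        simp only [map_mul, map_pow]; ring
    _ = C (σ := Fin 2) (R := K) (τ^n) *
          ((1 - u)^2 * ((C (σ := Fin 2) (R := K) τ - u) * (1 - C (σ := Fin 2) (R := K) τ * u))⁻¹) := by rw [hsc]
    _ = C (σ := Fin 2) (R := K) τ ^ n * (1 - u)^2 * ((C (σ := Fin 2) (R := K) τ - u) * (1 - C (σ := Fin 2) (R := K) τ * u))⁻¹ := by
        rw [map_pow]; ring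

end

noncomputable section



/-- The refined 20V generating function is palindromic: `τ^{2n-2}·G_n(τ⁻¹) = G_n(τ)`. -/
theorem refined_20V_palindromic (K : Type*) [Field K] [CharZero K] (n : ℕ) (hn : 1 ≤ n)
    (τ : K) (hτ0 : τ ≠ 0) :
    τ ^ (2 * n - 2) * G K n τ⁻¹ = G K n τ := by

  have hτi0 : τ⁻¹ ≠ 0 := inv_ne_zero hτ0
  set W : MvPowerSeries (Fin 2) K := ((1 + X 0) * ((1 - X (0 : Fin 2)))⁻¹) ^ (2 * n) with hW
  set E : K → MvPowerSeries (Fin 2) K := fun σ =>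
    (C (σ := Fin 2) (R := K) σ) ^ n * (1 - X 0) ^ 2 *
      (((C (σ := Fin 2) (R := K) σ) - X 0) * (1 - (C (σ := Fin 2) (R := K) σ) * X 0))⁻¹ - 1 with hE
  set g20 : MvPowerSeries (Fin 2) K :=
    (1 + (X 0 : MvPowerSeries (Fin 2) K) ^ 2) * (1 + 2 * X 0 - X 0 ^ 2) *
      ((1 - (X 0 : MvPowerSeries (Fin 2) K) ^ 2 * X 1) *
        ((1 - X 0) ^ 2 - X 1 * (1 + X 0) ^ 2))⁻¹ with hg20
  have hgref : ∀ σ : K, gref K n σ = g20 + (X 1 : MvPowerSeries (Fin 2) K) ^ (n-1) * (W * E σ) := by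
    intro σ
    unfold gref
    simp only [hg20, hW, hE]
    rw [mul_assoc ((X 1 : MvPowerSeries (Fin 2) K) ^ (n-1))]
  have hstep1 : ∀ (σ₁ σ₂ : K) (i j : ℕ), j < n - 1 →
      coeff (R := K) (Finsupp.single 0 i + Finsupp.single 1 j) (gref K n σ₁)
        = coeff (R := K) (Finsupp.single 0 i + Finsupp.single 1 j) (gref K n σ₂) := by
    intro σ₁ σ₂ i j hj
    rw [hgref σ₁, hgref σ₂, map_add, map_add, coeff_X1_pow_mul, coeff_X1_pow_mul,
      if_neg (by omega), if_neg (by omega)]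
  have hentry : ∀ (σ : K) (i : ℕ),
      coeff (R := K) (Finsupp.single 0 i + Finsupp.single 1 (n-1)) (gref K n σ)
        = coeff (R := K) (Finsupp.single 0 i + Finsupp.single 1 (n-1)) g20
          + coeff (R := K) (Finsupp.single (0 : Fin 2) i) (W * E σ) := by
    intro σ i
    rw [hgref σ, map_add, coeff_X1_pow_mul, if_pos le_rfl, Nat.sub_self, Finsupp.single_zero,
      add_zero]
  have hkey : C (σ := Fin 2) (R := K) (τ^(2*n-2)) * (W * E τ⁻¹)
      = W * E τ + (1 - C (σ := Fin 2) (R := K) (τ^(2*n-2))) * W := by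
    have hF := keyF (K := K) hn hτ0
    rw [hE]
    linear_combination W * hF
  have hstep2 : ∀ i : ℕ, i < n →
      τ^(2*n-2) * coeff (R := K) (Finsupp.single 0 i + Finsupp.single 1 (n-1)) (gref K n τ⁻¹)
        = coeff (R := K) (Finsupp.single 0 i + Finsupp.single 1 (n-1)) (gref K n τ) := by
    intro i hi
    rw [hentry τ⁻¹ i, hentry τ i]
    have h20 : coeff (R := K) (Finsupp.single 0 i + Finsupp.single 1 (n-1)) g20
        = coeff (R := K) (Finsupp.single (0 : Fin 2) i) W := by
      rw [hg20, hW]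
      exact coeff_g20 hn hi
    rw [h20]
    have h3 : τ^(2*n-2) * coeff (R := K) (Finsupp.single (0 : Fin 2) i) (W * E τ⁻¹)
        = coeff (R := K) (Finsupp.single (0 : Fin 2) i) (W * E τ)
          + coeff (R := K) (Finsupp.single (0 : Fin 2) i) W
          - τ^(2*n-2) * coeff (R := K) (Finsupp.single (0 : Fin 2) i) W := by
      rw [← MvPowerSeries.coeff_C_mul, hkey, map_add, sub_mul, one_mul, map_sub,
        MvPowerSeries.coeff_C_mul]
      ring
    linear_combination h3
  have hn' : n - 1 < n := by omega
  set Mi : Fin n := ⟨n - 1, hn'⟩ with hMi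
  have hMat : (Matrix.of fun i j : Fin n =>
        coeff (R := K) (Finsupp.single 0 (i : ℕ) + Finsupp.single 1 (j : ℕ)) (gref K n τ))
      = Matrix.updateCol (Matrix.of fun i j : Fin n =>
          coeff (R := K) (Finsupp.single 0 (i : ℕ) + Finsupp.single 1 (j : ℕ)) (gref K n τ⁻¹)) Mi
          (τ^(2*n-2) • fun i : Fin n =>
            coeff (R := K) (Finsupp.single 0 (i : ℕ) + Finsupp.single 1 ((Mi : ℕ))) (gref K n τ⁻¹)) := by
    ext i j
    rw [Matrix.updateCol_apply]
    split_ifs with hj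
    · subst hj
      simp only [Matrix.of_apply, Pi.smul_apply, smul_eq_mul]
      exact (hstep2 i i.isLt).symm
    · have hjlt : (j : ℕ) < n - 1 := by
        have h1 := j.isLt
        have h2 : (j : ℕ) ≠ n - 1 := by
          intro h
          exact hj (Fin.ext h)
        omega
      simp only [Matrix.of_apply]
      exact hstep1 τ τ⁻¹ i j hjlt
  rw [G, G, hMat, Matrix.det_updateCol_smul]
  congr 1
  exact congrArg Matrix.det (Matrix.updateCol_eq_self _ Mi).symm

end
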